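/- arXiv:1710.06079 — 6 statements merged into one kernel-verified Lean document; each statement's English description precedes it below -/
import Mathlib

section
/- Under the observability inequality, J is coercive; more precisely, J(η) ≥ ε‖η‖ − (1/2)·C²·‖v‖² for every η ∈ H, so J(η) → ∞ as ‖η‖ → ∞. -/
open scoped RealInnerProductSpace

/-- Under the observability inequality `‖R η‖ ≤ C ‖S η‖`, the functional
`J(η) = (1/2)‖S η‖² + ε‖η‖ + ⟨v, R η⟩` is coercive:
`J η ≥ ε‖η‖ − (1/2) C² ‖v‖²` for all `η`, and `J η → ∞` as `‖η‖ → ∞`. -/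
theorem stmt2 {H K K₀ : Type*}
    [NormedAddCommGroup H] [InnerProductSpace ℝ H] [CompleteSpace H]
    [NormedAddCommGroup K] [InnerProductSpace ℝ K] [CompleteSpace K]
    [NormedAddCommGroup K₀] [InnerProductSpace ℝ K₀] [CompleteSpace K₀]
    (S : H →L[ℝ] K) (R : H →L[ℝ] K₀) (v : K₀) (ε : ℝ) (hε : 0 < ε)
    (C : ℝ) (hC : 0 < C) (hobs : ∀ η : H, ‖R η‖ ≤ C * ‖S η‖)
    (J : H → ℝ)
    (hJ : ∀ η : H, J η = (1 / 2) * ‖S η‖ ^ 2 + ε * ‖η‖ + ⟪v, R η⟫) :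
    (∀ η : H, ε * ‖η‖ - (1 / 2) * C ^ 2 * ‖v‖ ^ 2 ≤ J η) ∧
      Filter.Tendsto J (Filter.comap norm Filter.atTop) Filter.atTop := by
  have key : ∀ η : H, ε * ‖η‖ - (1 / 2) * C ^ 2 * ‖v‖ ^ 2 ≤ J η := by
    intro η
    rw [hJ η]
    have h1 : -(‖v‖ * ‖R η‖) ≤ ⟪v, R η⟫ := by
      have := abs_real_inner_le_norm v (R η)
      linarith [neg_abs_le (⟪v, R η⟫ : ℝ)]
    have h2 : ‖v‖ * ‖R η‖ ≤ ‖v‖ * (C * ‖S η‖) :=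
      mul_le_mul_of_nonneg_left (hobs η) (norm_nonneg v)
    have h3 : ‖v‖ * (C * ‖S η‖) ≤ (1/2) * C ^ 2 * ‖v‖ ^ 2 + (1/2) * ‖S η‖ ^ 2 := by
      nlinarith [sq_nonneg (C * ‖v‖ - ‖S η‖)]
    linarith
  refine ⟨key, ?_⟩
  have hnorm : Filter.Tendsto (fun η : H => ‖η‖) (Filter.comap norm Filter.atTop) Filter.atTop :=
    Filter.tendsto_comap
  have : Filter.Tendsto (fun η : H => ε * ‖η‖ - (1 / 2) * C ^ 2 * ‖v‖ ^ 2)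
      (Filter.comap norm Filter.atTop) Filter.atTop :=
    Filter.tendsto_atTop_add_const_right _ _ ((hnorm.const_mul_atTop hε))
  exact Filter.tendsto_atTop_mono key this
end

section
/- Under the observability inequality, the functional J attains its infimum: there exists η* ∈ H such that J(η*) = inf_{η ∈ H} J(η). -/
open scoped RealInnerProductSpace

open Metric NormedSpace ContinuousLinearMap

/-- A lower semicontinuous real function attains its minimum on a nonempty
compact closed set. -/
lemma lsc_exists_min_aux {X : Type*} [TopologicalSpace X] {s : Set X} (hs : IsCompact s)
    (hcl : IsClosed s) (hne : s.Nonempty) {f : X → ℝ} (hf : LowerSemicontinuous f) :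
    ∃ x ∈ s, ∀ y ∈ s, f x ≤ f y := by
  obtain ⟨x₀, hx₀⟩ := hne
  haveI hTne : Nonempty {c : ℝ // (s ∩ f ⁻¹' Set.Iic c).Nonempty} :=
    ⟨⟨f x₀, ⟨x₀, hx₀, Set.mem_preimage.mpr (Set.mem_Iic.mpr (le_refl (f x₀)))⟩⟩⟩
  set Z : {c : ℝ // (s ∩ f ⁻¹' Set.Iic c).Nonempty} → Set X :=
    fun c => s ∩ f ⁻¹' Set.Iic c.1 with hZdef
  have hmono : ∀ c d : {c : ℝ // (s ∩ f ⁻¹' Set.Iic c).Nonempty},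
      c.1 ≤ d.1 → Z c ⊆ Z d := fun c d h x hx => ⟨hx.1, by exact le_trans hx.2 h⟩
  have hdir : Directed (· ⊇ ·) Z := by
    intro c d
    rcases le_total c.1 d.1 with h | h
    · exact ⟨c, subset_rfl, hmono c d h⟩
    · exact ⟨d, hmono d c h, subset_rfl⟩
  have hmem := IsCompact.nonempty_iInter_of_directed_nonempty_isCompact_isClosed
    Z hdir (fun c => c.2)
    (fun c => hs.inter_right (hf.isClosed_preimage c.1))
    (fun c => hcl.inter (hf.isClosed_preimage c.1))
  obtain ⟨x, hx⟩ := hmem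
  rw [Set.mem_iInter] at hx
  refine ⟨x, (hx (Classical.arbitrary _)).1, fun y hy => ?_⟩
  exact (hx ⟨f y, ⟨y, hy, Set.mem_preimage.mpr (Set.mem_Iic.mpr (le_refl (f y)))⟩⟩).2

/-- Under the observability inequality `‖R η‖ ≤ C ‖S η‖`, the functional
`J(η) = (1/2)‖S η‖² + ε‖η‖ + ⟨v, R η⟩` attains its infimum:
there exists `η⋆` with `J η⋆ = inf J`. -/
theorem stmt3 {H K K₀ : Type*}
    [NormedAddCommGroup H] [InnerProductSpace ℝ H] [CompleteSpace H]
    [NormedAddCommGroup K] [InnerProductSpace ℝ K] [CompleteSpace K]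
    [NormedAddCommGroup K₀] [InnerProductSpace ℝ K₀] [CompleteSpace K₀]
    (S : H →L[ℝ] K) (R : H →L[ℝ] K₀) (v : K₀) (ε : ℝ) (hε : 0 < ε)
    (C : ℝ) (hC : 0 < C) (hobs : ∀ η : H, ‖R η‖ ≤ C * ‖S η‖)
    (J : H → ℝ)
    (hJ : ∀ η : H, J η = (1 / 2) * ‖S η‖ ^ 2 + ε * ‖η‖ + ⟪v, R η⟫) :
    ∃ ηs : H, (∀ η : H, J ηs ≤ J η) ∧ J ηs = sInf (Set.range J) := by
  classical
  -- identification of `WeakDual ℝ H` with `H`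
  set ι : WeakDual ℝ H → H :=
    fun x => (InnerProductSpace.toDual ℝ H).symm (WeakDual.toStrongDual x) with hιdef
  have hι_inner : ∀ (x : WeakDual ℝ H) (u : H), ⟪u, ι x⟫ = x u := by
    intro x u
    rw [real_inner_comm]
    exact InnerProductSpace.toDual_symm_apply
  -- the functional transported to the weak dual
  set G : WeakDual ℝ H → ℝ := fun x => J (ι x) with hGdef
  -- `G` is lower semicontinuous for the weak-* topology
  have hG : LowerSemicontinuous G := by
    intro x y hy
    set u := S (ι x) with hudef
    set a : H := if h : ι x = 0 then 0 else (ε / ‖ι x‖) • (ι x) with hadef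
    have ha_norm : ‖a‖ ≤ ε := by
      rw [hadef]
      split_ifs with h
      · simpa using hε.le
      · rw [norm_smul, norm_div, Real.norm_eq_abs, abs_of_pos hε, Real.norm_eq_abs,
          abs_of_pos (norm_pos_iff.mpr h), div_mul_cancel₀]
        exact (norm_pos_iff.mpr h).ne'
    have ha_inner : ⟪a, ι x⟫ = ε * ‖ι x‖ := by
      rw [hadef]
      split_ifs with h
      · simp [h]
      · rw [real_inner_smul_left, real_inner_self_eq_norm_sq]
        have hpos : (0 : ℝ) < ‖ι x‖ := norm_pos_iff.mpr h
        field_simp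
    set w : H := adjoint S u + a + adjoint R v with hwdef
    set g : WeakDual ℝ H → ℝ := fun z => z w - (1 / 2) * ‖u‖ ^ 2 with hgdef
    have hg_cont : Continuous g := (WeakDual.eval_continuous w).sub continuous_const
    have hzw : ∀ z : WeakDual ℝ H, z w = ⟪u, S (ι z)⟫ + ⟪a, ι z⟫ + ⟪v, R (ι z)⟫ := by
      intro z
      rw [← hι_inner z w, hwdef, inner_add_left, inner_add_left,
        adjoint_inner_left, adjoint_inner_left]
    have hg_le : ∀ z, g z ≤ G z := by
      intro z
      rw [hgdef]
      simp only
      rw [hzw z, hGdef]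
      simp only
      rw [hJ (ι z)]
      have h1 : ⟪u, S (ι z)⟫ ≤ ‖u‖ * ‖S (ι z)‖ := real_inner_le_norm u (S (ι z))
      have h2 : ⟪a, ι z⟫ ≤ ‖a‖ * ‖ι z‖ := real_inner_le_norm a (ι z)
      have h3 : ‖a‖ * ‖ι z‖ ≤ ε * ‖ι z‖ :=
        mul_le_mul_of_nonneg_right ha_norm (norm_nonneg _)
      nlinarith [sq_nonneg (‖u‖ - ‖S (ι z)‖)]
    have hg_eq : g x = G x := by
      have e1 : ⟪u, S (ι x)⟫ = ‖S (ι x)‖ ^ 2 := by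
        rw [hudef]; exact real_inner_self_eq_norm_sq _
      have e3 : ‖u‖ = ‖S (ι x)‖ := by rw [hudef]
      rw [hgdef]
      simp only
      rw [hzw x, hGdef]
      simp only
      rw [hJ (ι x), e1, ha_inner, e3]
      ring
    have hopen : IsOpen {z : WeakDual ℝ H | y < g z} :=
      isOpen_lt continuous_const hg_cont
    have hxmem : x ∈ {z : WeakDual ℝ H | y < g z} := by
      rw [Set.mem_setOf_eq, hg_eq]; exact hy
    filter_upwards [hopen.mem_nhds hxmem] with z hz
    exact lt_of_lt_of_le hz (hg_le z)
  -- coercivity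
  have hcoer : ∀ η : H, ε * ‖η‖ - (1 / 2) * (C * ‖v‖) ^ 2 ≤ J η := by
    intro η
    rw [hJ η]
    have h1 : |⟪v, R η⟫| ≤ ‖v‖ * ‖R η‖ := abs_real_inner_le_norm v (R η)
    have h2 := hobs η
    have h3 := norm_nonneg v
    have h4 := norm_nonneg (S η)
    have h5 := abs_le.mp h1
    nlinarith [sq_nonneg (‖S η‖ - C * ‖v‖)]
  have hJ0 : J 0 = 0 := by
    rw [hJ 0]; simp
  -- the compact ball
  set ρ : ℝ := C ^ 2 * ‖v‖ ^ 2 / (2 * ε) with hρdef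
  have hρ0 : 0 ≤ ρ := by positivity
  set B : Set (WeakDual ℝ H) := WeakDual.toStrongDual ⁻¹' closedBall (0 : StrongDual ℝ H) ρ with hBdef
  have hBc : IsCompact B := WeakDual.isCompact_closedBall (0 : StrongDual ℝ H) ρ
  have hBcl : IsClosed B := WeakDual.isClosed_closedBall (0 : StrongDual ℝ H) ρ
  -- the canonical point of `WeakDual ℝ H` over `η : H`
  set κ : H → WeakDual ℝ H :=
    fun η => StrongDual.toWeakDual (InnerProductSpace.toDual ℝ H η) with hκdef
  have hκι : ∀ η : H, ι (κ η) = η := by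
    intro η
    rw [hιdef, hκdef]
    simp only
    have : WeakDual.toStrongDual (StrongDual.toWeakDual (InnerProductSpace.toDual ℝ H η)) =
        InnerProductSpace.toDual ℝ H η := rfl
    rw [this, LinearIsometryEquiv.symm_apply_apply]
  have hκB : ∀ η : H, ‖η‖ ≤ ρ → κ η ∈ B := by
    intro η hη
    rw [hBdef]
    simp only [Set.mem_preimage, mem_closedBall_zero_iff]
    have : WeakDual.toStrongDual (κ η) = InnerProductSpace.toDual ℝ H η := rfl
    rw [this]
    rwa [LinearIsometryEquiv.norm_map]
  have hBne : B.Nonempty := ⟨κ (0 : H), hκB (0 : H) (by simpa using hρ0)⟩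
  -- minimize `G` on the compact ball
  obtain ⟨xs, hxsB, hxs⟩ := lsc_exists_min_aux hBc hBcl hBne hG
  refine ⟨ι xs, ?_, ?_⟩
  case _ =>
    -- global minimality
    have hmin0 : J (ι xs) ≤ 0 := by
      have := hxs (κ (0 : H)) (hκB (0 : H) (by simpa using hρ0))
      rw [hGdef] at this
      simp only at this
      rw [hκι (0 : H), hJ0] at this
      exact this
    intro η
    by_cases hle : ‖η‖ ≤ ρ
    · have := hxs (κ η) (hκB η hle)
      rw [hGdef] at this
      simp only at this
      rwa [hκι η] at this
    · push_neg at hle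
      have h1 := hcoer η
      have h2 : ε * ρ ≤ ε * ‖η‖ := mul_le_mul_of_nonneg_left hle.le hε.le
      have h3 : ε * ρ = (1 / 2) * (C * ‖v‖) ^ 2 := by
        rw [hρdef]
        field_simp
      linarith
  case _ =>
    -- equals the infimum
    have hmin : ∀ η : H, J (ι xs) ≤ J η := by
      intro η
      by_cases hle : ‖η‖ ≤ ρ
      · have := hxs (κ η) (hκB η hle)
        rw [hGdef] at this
        simp only at this
        rwa [hκι η] at this
      · push_neg at hle
        have hmin0 : J (ι xs) ≤ 0 := by
          have := hxs (κ (0 : H)) (hκB (0 : H) (by simpa using hρ0))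
          rw [hGdef] at this
          simp only at this
          rw [hκι (0 : H), hJ0] at this
          exact this
        have h1 := hcoer η
        have h2 : ε * ρ ≤ ε * ‖η‖ := mul_le_mul_of_nonneg_left hle.le hε.le
        have h3 : ε * ρ = (1 / 2) * (C * ‖v‖) ^ 2 := by
          rw [hρdef]
          field_simp
        linarith
    have hlb : ∀ z ∈ Set.range J, J (ι xs) ≤ z := by
      rintro z ⟨η, rfl⟩
      exact hmin η
    exact le_antisymm (le_csInf ⟨J (ι xs), ⟨ι xs, rfl⟩⟩ hlb)
      (csInf_le ⟨J (ι xs), hlb⟩ ⟨ι xs, rfl⟩)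
end

section
/- If η* ∈ H is a minimizer of J, then for every η ∈ H one has |⟨S η*, S η⟩ + ⟨v, R η⟩| ≤ ε‖η‖. -/
open scoped RealInnerProductSpace

/-- If `ηs` minimizes `J(η) = (1/2)‖S η‖² + ε‖η‖ + ⟨v, R η⟩`, then for every `η`
one has `|⟨S ηs, S η⟩ + ⟨v, R η⟩| ≤ ε‖η‖`. -/
theorem stmt4 {H K K₀ : Type*}
    [NormedAddCommGroup H] [InnerProductSpace ℝ H] [CompleteSpace H]
    [NormedAddCommGroup K] [InnerProductSpace ℝ K] [CompleteSpace K]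
    [NormedAddCommGroup K₀] [InnerProductSpace ℝ K₀] [CompleteSpace K₀]
    (S : H →L[ℝ] K) (R : H →L[ℝ] K₀) (v : K₀) (ε : ℝ) (hε : 0 < ε)
    (J : H → ℝ)
    (hJ : ∀ η : H, J η = (1 / 2) * ‖S η‖ ^ 2 + ε * ‖η‖ + ⟪v, R η⟫)
    (ηs : H) (hmin : ∀ η : H, J ηs ≤ J η) :
    ∀ η : H, |⟪S ηs, S η⟫ + ⟪v, R η⟫| ≤ ε * ‖η‖ := by
  have key : ∀ η : H, 0 ≤ ⟪S ηs, S η⟫ + ⟪v, R η⟫ + ε * ‖η‖ := by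
    intro η
    refine le_of_forall_pos_le_add (fun δ hδ => ?_)
    set B : ℝ := ‖S η‖ ^ 2 with hB
    have hB0 : 0 ≤ B := by positivity
    set t : ℝ := 2 * δ / (B + 1) with ht
    have ht0 : 0 < t := by positivity
    have h1 := hmin (ηs + t • η)
    rw [hJ, hJ] at h1
    have hmap1 : S (ηs + t • η) = S ηs + t • S η := by
      rw [map_add, map_smul]
    have hmap2 : R (ηs + t • η) = R ηs + t • R η := by
      rw [map_add, map_smul]
    rw [hmap1, hmap2] at h1
    have hexp : ‖S ηs + t • S η‖ ^ 2
        = ‖S ηs‖ ^ 2 + 2 * (t * ⟪S ηs, S η⟫) + t ^ 2 * ‖S η‖ ^ 2 := by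
      rw [@norm_add_sq_real, real_inner_smul_right, norm_smul]
      rw [Real.norm_eq_abs, abs_of_pos ht0]
      ring
    have hinner : ⟪v, R ηs + t • R η⟫ = ⟪v, R ηs⟫ + t * ⟪v, R η⟫ := by
      rw [inner_add_right, real_inner_smul_right]
    have hnorm : ‖ηs + t • η‖ ≤ ‖ηs‖ + t * ‖η‖ := by
      calc ‖ηs + t • η‖ ≤ ‖ηs‖ + ‖t • η‖ := norm_add_le _ _
        _ = ‖ηs‖ + t * ‖η‖ := by
            rw [norm_smul, Real.norm_eq_abs, abs_of_pos ht0]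
    rw [hexp, hinner] at h1
    -- from h1 and hnorm: 0 ≤ t*⟪Sηs,Sη⟫ + (t²/2)B + t*ε*‖η‖ + t*⟪v,Rη⟫
    have h2 : 0 ≤ t * ⟪S ηs, S η⟫ + t ^ 2 / 2 * B + t * (ε * ‖η‖) + t * ⟪v, R η⟫ := by
      nlinarith [h1, mul_le_mul_of_nonneg_left hnorm hε.le]
    have h3 : 0 ≤ ⟪S ηs, S η⟫ + t / 2 * B + ε * ‖η‖ + ⟪v, R η⟫ := by
      nlinarith [mul_pos ht0 ht0]
    have h4 : t / 2 * B ≤ δ := by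
      rw [ht, div_div, div_mul_eq_mul_div, div_le_iff₀ (by positivity : (0:ℝ) < (B+1)*2)]
      nlinarith
    linarith
  intro η
  have h1 := key η
  have h2 := key (-η)
  rw [map_neg, map_neg, inner_neg_right, inner_neg_right, norm_neg] at h2
  rw [abs_le]
  constructor <;> linarith
end

section
/- If η* ∈ H is a minimizer of J and η* ≠ 0, then the Euler–Lagrange equation holds: for every η ∈ H, ⟨S η*, S η⟩ + ε·⟨η*, η⟩/‖η*‖ + ⟨v, R η⟩ = 0. -/
open scoped RealInnerProductSpace

/-- If `ηs ≠ 0` minimizes `J(η) = (1/2)‖S η‖² + ε‖η‖ + ⟨v, R η⟩`, then the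
Euler–Lagrange equation holds:
`⟨S ηs, S η⟩ + ε ⟨ηs, η⟩/‖ηs‖ + ⟨v, R η⟩ = 0` for every `η`. -/
theorem stmt5 {H K K₀ : Type*}
    [NormedAddCommGroup H] [InnerProductSpace ℝ H] [CompleteSpace H]
    [NormedAddCommGroup K] [InnerProductSpace ℝ K] [CompleteSpace K]
    [NormedAddCommGroup K₀] [InnerProductSpace ℝ K₀] [CompleteSpace K₀]
    (S : H →L[ℝ] K) (R : H →L[ℝ] K₀) (v : K₀) (ε : ℝ) (hε : 0 < ε)
    (J : H → ℝ)
    (hJ : ∀ η : H, J η = (1 / 2) * ‖S η‖ ^ 2 + ε * ‖η‖ + ⟪v, R η⟫)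
    (ηs : H) (hmin : ∀ η : H, J ηs ≤ J η) (hne : ηs ≠ 0) :
    ∀ η : H, ⟪S ηs, S η⟫ + ε * (⟪ηs, η⟫ / ‖ηs‖) + ⟪v, R η⟫ = 0 := by
  intro η
  have hnn : ‖ηs‖ ≠ 0 := norm_ne_zero_iff.mpr hne
  -- the affine curves
  have haff : HasDerivAt (fun t : ℝ => ηs + t • η) η 0 := by
    simpa using ((hasDerivAt_id (0:ℝ)).smul_const η).const_add ηs
  have haffS : HasDerivAt (fun t : ℝ => S (ηs + t • η)) (S η) 0 := by
    exact S.hasFDerivAt.comp_hasDerivAt 0 haff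
  have haffR : HasDerivAt (fun t : ℝ => R (ηs + t • η)) (R η) 0 := by
    exact R.hasFDerivAt.comp_hasDerivAt 0 haff
  -- term 1
  have hin1 : HasDerivAt (fun t : ℝ => ⟪S (ηs + t • η), S (ηs + t • η)⟫)
      (2 * ⟪S ηs, S η⟫) 0 := by
    have := haffS.inner ℝ haffS
    simp only [zero_smul, add_zero] at this
    convert this using 1
    · rfl
    · rfl
    rw [real_inner_comm (S η)]
    ring
  have h1 : HasDerivAt (fun t : ℝ => (1/2) * ‖S (ηs + t • η)‖ ^ 2) ⟪S ηs, S η⟫ 0 := by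
    have := hin1.const_mul (1/2 : ℝ)
    simp only [show ∀ x : K, ⟪x, x⟫ = ‖x‖ ^ 2 from fun x => real_inner_self_eq_norm_sq x] at this
    convert this using 1
    · rfl
    · rfl
    ring
  -- term 2
  have hin2 : HasDerivAt (fun t : ℝ => ⟪ηs + t • η, ηs + t • η⟫)
      (2 * ⟪ηs, η⟫) 0 := by
    have := haff.inner ℝ haff
    simp only [zero_smul, add_zero] at this
    convert this using 1
    · rfl
    · rfl
    rw [real_inner_comm η]
    ring
  have hsqrt : HasDerivAt (fun t : ℝ => Real.sqrt ⟪ηs + t • η, ηs + t • η⟫)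
      (⟪ηs, η⟫ / ‖ηs‖) 0 := by
    have hx : ⟪(ηs : H) + (0:ℝ) • η, ηs + (0:ℝ) • η⟫ ≠ 0 := by
      simp only [zero_smul, add_zero]
      rw [real_inner_self_eq_norm_sq]
      positivity
    have := hin2.sqrt hx
    convert this using 1
    simp only [zero_smul, add_zero, real_inner_self_eq_norm_sq]
    rw [Real.sqrt_sq (norm_nonneg _)]
    field_simp
  have h2 : HasDerivAt (fun t : ℝ => ε * ‖ηs + t • η‖) (ε * (⟪ηs, η⟫ / ‖ηs‖)) 0 := by
    have := hsqrt.const_mul ε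
    convert this using 2 with t
    · rfl
    · rfl
    rw [real_inner_self_eq_norm_sq, Real.sqrt_sq (norm_nonneg _)]
  -- term 3
  have h3 : HasDerivAt (fun t : ℝ => ⟪v, R (ηs + t • η)⟫) ⟪v, R η⟫ 0 := by
    have := (hasDerivAt_const (0:ℝ) v).inner ℝ haffR
    simpa using this
  have hf : HasDerivAt (fun t : ℝ => J (ηs + t • η))
      (⟪S ηs, S η⟫ + ε * (⟪ηs, η⟫ / ‖ηs‖) + ⟪v, R η⟫) 0 := by
    have := (h1.add h2).add h3
    convert this using 2 with t
    · rfl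
    · rfl
    rw [hJ]
    rfl
  have hlm : IsLocalMin (fun t : ℝ => J (ηs + t • η)) 0 := by
    have hm : IsMinOn (fun t : ℝ => J (ηs + t • η)) Set.univ 0 := by
      intro t _
      simp only [Set.mem_setOf_eq, zero_smul, add_zero]
      exact hmin _
    exact hm.isLocalMin Filter.univ_mem
  exact hlm.hasDerivAt_eq_zero hf
end

section
/- Assume the observability inequality ‖R η‖² ≤ C‖S η‖² for all η ∈ H (with C > 0). If η* ∈ H is a minimizer of J, then ‖R η*‖ ≤ C‖v‖, ε‖η*‖ ≤ C‖v‖², and ‖S η*‖² ≤ C‖v‖². -/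
open scoped RealInnerProductSpace

/-- Assume the observability inequality `‖R η‖² ≤ C ‖S η‖²` with `C > 0`.
If `ηs` minimizes `J(η) = (1/2)‖S η‖² + ε‖η‖ + ⟨v, R η⟩`, then
`‖R ηs‖ ≤ C‖v‖`, `ε‖ηs‖ ≤ C‖v‖²`, and `‖S ηs‖² ≤ C‖v‖²`. -/
theorem stmt7 {H K K₀ : Type*}
    [NormedAddCommGroup H] [InnerProductSpace ℝ H] [CompleteSpace H]
    [NormedAddCommGroup K] [InnerProductSpace ℝ K] [CompleteSpace K]
    [NormedAddCommGroup K₀] [InnerProductSpace ℝ K₀] [CompleteSpace K₀]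
    (S : H →L[ℝ] K) (R : H →L[ℝ] K₀) (v : K₀) (ε : ℝ) (hε : 0 < ε)
    (C : ℝ) (hC : 0 < C) (hobs : ∀ η : H, ‖R η‖ ^ 2 ≤ C * ‖S η‖ ^ 2)
    (J : H → ℝ)
    (hJ : ∀ η : H, J η = (1 / 2) * ‖S η‖ ^ 2 + ε * ‖η‖ + ⟪v, R η⟫)
    (ηs : H) (hmin : ∀ η : H, J ηs ≤ J η) :
    ‖R ηs‖ ≤ C * ‖v‖ ∧ ε * ‖ηs‖ ≤ C * ‖v‖ ^ 2 ∧ ‖S ηs‖ ^ 2 ≤ C * ‖v‖ ^ 2 := by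
  set Q : ℝ := ‖S ηs‖ ^ 2 with hQ
  set L : ℝ := ε * ‖ηs‖ + ⟪v, R ηs⟫ with hL
  have hQ0 : 0 ≤ Q := sq_nonneg _
  -- Step 1: variational inequality at scalings t • ηs, for 0 ≤ t < 1
  have hstep : ∀ t : ℝ, 0 ≤ t → t < 1 → (1 + t) / 2 * Q ≤ -L := by
    intro t ht ht1
    have h := hmin (t • ηs)
    rw [hJ, hJ] at h
    have hnorm : ‖S (t • ηs)‖ = t * ‖S ηs‖ := by
      rw [map_smul, norm_smul, Real.norm_eq_abs, abs_of_nonneg ht]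
    have hnorm2 : ‖t • ηs‖ = t * ‖ηs‖ := by
      rw [norm_smul, Real.norm_eq_abs, abs_of_nonneg ht]
    have hinner : ⟪v, R (t • ηs)⟫ = t * ⟪v, R ηs⟫ := by
      rw [map_smul, real_inner_smul_right]
    rw [hnorm, hnorm2, hinner, mul_pow] at h
    have h1t : (0:ℝ) < 1 - t := by linarith
    nlinarith [h, h1t, sq_nonneg (1 - t)]
  -- Step 2: let t → 1⁻ to get Q + L ≤ 0
  have key : Q ≤ -L := by
    have hlim : Filter.Tendsto (fun n : ℕ => (1 + (1 - 1 / (n + 1 : ℝ))) / 2 * Q)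
        Filter.atTop (nhds ((1 + (1 - 0)) / 2 * Q)) := by
      exact (((tendsto_const_nhds.sub
        tendsto_one_div_add_atTop_nhds_zero_nat).const_add 1).div_const 2).mul_const Q
    have hlim' : Filter.Tendsto (fun n : ℕ => (1 + (1 - 1 / (n + 1 : ℝ))) / 2 * Q)
        Filter.atTop (nhds Q) := by
      convert hlim using 2; norm_num
    refine le_of_tendsto hlim' (Filter.Eventually.of_forall fun n => ?_)
    have hp : (0:ℝ) < 1 / (n + 1 : ℝ) := by positivity
    have hle : (1:ℝ) / (n + 1 : ℝ) ≤ 1 := by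
      rw [div_le_one (by positivity)]; linarith [Nat.cast_nonneg (α := ℝ) n]
    exact hstep _ (by linarith) (by linarith)
  have hkey : Q + ε * ‖ηs‖ ≤ ‖v‖ * ‖R ηs‖ := by
    have hcs : -⟪v, R ηs⟫ ≤ ‖v‖ * ‖R ηs‖ := by
      have := real_inner_le_norm v (-(R ηs))
      rwa [inner_neg_right, norm_neg] at this
    rw [hL] at key; linarith
  -- Step 3: combine with observability
  set a : ℝ := ‖S ηs‖
  set b : ℝ := ‖R ηs‖
  set w : ℝ := ‖v‖
  have ha : 0 ≤ a := norm_nonneg _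
  have hb : 0 ≤ b := norm_nonneg _
  have hw : 0 ≤ w := norm_nonneg _
  have hobs' : b ^ 2 ≤ C * a ^ 2 := hobs ηs
  have hεr : 0 ≤ ε * ‖ηs‖ := by positivity
  have ha2 : a ^ 2 ≤ w * b := by nlinarith
  -- a² ≤ C w²
  have hSq : a ^ 2 ≤ C * w ^ 2 := by
    rcases eq_or_lt_of_le ha with h0 | h0
    · rw [← h0]; norm_num; positivity
    · nlinarith [mul_le_mul ha2 ha2 (by positivity) (by nlinarith),
        mul_pos h0 h0]
  have hRb : b ≤ C * w := by
    have hb2 : b ^ 2 ≤ C ^ 2 * w ^ 2 := by nlinarith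
    nlinarith [hb2, mul_nonneg hC.le hw]
  have hεs : ε * ‖ηs‖ ≤ C * w ^ 2 := by nlinarith
  exact ⟨hRb, hεs, hSq⟩
end

section
/- If θ* ∈ Θ maximizes θ ↦ ∫_D θ H dx over Θ, then θ*(x) = 1 for a.e. x ∈ {H > c(α)} and θ*(x) = 0 for a.e. x ∈ {H < c(α)}; equivalently, the sets A = {H > c(α)} ∩ {θ* < 1} and B = {H < c(α)} ∩ {θ* > 0} are Lebesgue-null. -/
open MeasureTheory

/-- If `θs ∈ Θ` maximizes `θ ↦ ∫_D θ H` over `Θ`, then `θs = 1` a.e. on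
`{H > c(α)}` and `θs = 0` a.e. on `{H < c(α)}`; equivalently the sets
`A = {H > c(α)} ∩ {θs < 1}` and `B = {H < c(α)} ∩ {θs > 0}` are null. -/
theorem stmt13 {d : ℕ} (D : Set (EuclideanSpace ℝ (Fin d)))
    (hD : MeasurableSet D) (hD0 : 0 < volume D) (hDfin : volume D < ⊤)
    (α : ℝ) (hα : α ∈ Set.Ioo (0 : ℝ) 1)
    (Θ : Set (EuclideanSpace ℝ (Fin d) → ℝ))
    (hΘ : Θ = {θ | AEStronglyMeasurable θ (volume.restrict D) ∧
      (∀ᵐ x ∂(volume.restrict D), θ x ∈ Set.Icc (0 : ℝ) 1) ∧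
      ∫ x in D, θ x = α * (volume D).toReal})
    (H : EuclideanSpace ℝ (Fin d) → ℝ)
    (hH : IntegrableOn H D) (hHpos : ∀ x ∈ D, 0 ≤ H x)
    (c : ℝ)
    (hc : c = sSup {c' : ℝ | 0 ≤ c' ∧
      α * (volume D).toReal ≤ (volume {x ∈ D | c' ≤ H x}).toReal})
    (θs : EuclideanSpace ℝ (Fin d) → ℝ) (hθs : θs ∈ Θ)
    (hmax : ∀ θ ∈ Θ, ∫ x in D, θ x * H x ≤ ∫ x in D, θs x * H x) :
    volume {x ∈ D | c < H x ∧ θs x < 1} = 0 ∧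
      volume {x ∈ D | H x < c ∧ 0 < θs x} = 0 := by
  classical
  obtain ⟨hα0, hα1⟩ := hα
  set ν := volume.restrict D with hν
  haveI : IsFiniteMeasure ν := ⟨by rw [hν, Measure.restrict_apply_univ]; exact hDfin⟩
  set M := (volume D).toReal with hM
  have hM0 : 0 < M := ENNReal.toReal_pos hD0.ne' hDfin.ne
  have hαM0 : 0 < α * M := mul_pos hα0 hM0
  have hres : ∀ s : Set (EuclideanSpace ℝ (Fin d)), ν s = volume (s ∩ D) := fun s =>
    Measure.restrict_apply' hD
  have hsetD : ∀ P : EuclideanSpace ℝ (Fin d) → Prop,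
      {x ∈ D | P x} = {x | P x} ∩ D := by
    intro P; ext x; simp [and_comm]
  -- measurable representative of H
  set H' := hH.1.mk H with hH'def
  have hH'm : StronglyMeasurable H' := hH.1.stronglyMeasurable_mk
  have hHH' : H =ᵐ[ν] H' := hH.1.ae_eq_mk
  have hH'meas : Measurable H' := hH'm.measurable
  -- data of θs
  rw [hΘ] at hθs
  obtain ⟨hθsm, hθsb, hθsint⟩ := hθs
  -- measures of superlevel sets transfer
  have hmeasEq : ∀ c' : ℝ, ν {x | c' ≤ H x} = ν {x | c' ≤ H' x} := by
    intro c'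
    apply measure_congr
    filter_upwards [hHH'] with x hx
    change (c' ≤ H x) = (c' ≤ H' x)
    rw [hx]
  have hvol : ∀ c' : ℝ, volume {x ∈ D | c' ≤ H x} = ν {x | c' ≤ H' x} := by
    intro c'
    rw [← hmeasEq, hres, hsetD]
  -- the set defining c
  set S := {c' : ℝ | 0 ≤ c' ∧ α * M ≤ (volume {x ∈ D | c' ≤ H x}).toReal} with hS
  have h0S : (0 : ℝ) ∈ S := by
    refine ⟨le_refl 0, ?_⟩
    have hDeq : {x ∈ D | (0:ℝ) ≤ H x} = D := by
      ext x; simp only [Set.mem_setOf_eq, Set.sep_setOf, and_iff_left_iff_imp]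
      exact hHpos x
    rw [hDeq, ← hM]
    nlinarith
  have hHnn : 0 ≤ᵐ[ν] H := by
    filter_upwards [ae_restrict_mem hD] with x hx
    exact hHpos x hx
  have hSbdd : BddAbove S := by
    refine ⟨(∫ x, H x ∂ν) / (α * M), ?_⟩
    rintro c' ⟨hc'0, hc'⟩
    have hmar := mul_meas_ge_le_integral_of_nonneg hHnn hH c'
    have h1 : volume {x ∈ D | c' ≤ H x} = ν {x | c' ≤ H x} := by
      rw [hres, hsetD]
    rw [h1] at hc'
    have h2 : c' * (α * M) ≤ ∫ x, H x ∂ν := by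
      calc c' * (α * M) ≤ c' * (ν {x | c' ≤ H x}).toReal := by
            exact mul_le_mul_of_nonneg_left hc' hc'0
        _ ≤ ∫ x, H x ∂ν := hmar
    exact (le_div_iff₀ hαM0).2 h2
  have hc0 : 0 ≤ c := hc ▸ le_csSup hSbdd h0S
  -- lower bound on superlevel measures below c
  have hlow : ∀ b, b < c → ENNReal.ofReal (α * M) ≤ ν {x | b ≤ H' x} := by
    intro b hb
    obtain ⟨s, hsS, hbs⟩ := exists_lt_of_lt_csSup ⟨0, h0S⟩ (hc ▸ hb)
    have h1 : α * M ≤ (ν {x | s ≤ H' x}).toReal := by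
      rw [← hvol]; exact hsS.2
    have h2 : ν {x | s ≤ H' x} ≤ ν {x | b ≤ H' x} :=
      measure_mono (fun x hx => le_trans hbs.le hx)
    exact le_trans (ENNReal.ofReal_le_of_le_toReal h1) h2
  -- measure of {H' ≥ c} is at least αM
  have hm2 : ENNReal.ofReal (α * M) ≤ ν {x | c ≤ H' x} := by
    have hseq : {x | c ≤ H' x} = ⋂ n : ℕ, {x | c - 1/(n+1) ≤ H' x} := by
      ext x
      simp only [Set.mem_iInter, Set.mem_setOf_eq]
      constructor
      · intro h n
        have : (0:ℝ) < 1/(n+1) := by positivity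
        linarith
      · intro h
        by_contra hlt
        push_neg at hlt
        obtain ⟨n, hn⟩ := exists_nat_one_div_lt (show (0:ℝ) < c - H' x by linarith)
        have := h n
        linarith
    have hanti : Antitone (fun n : ℕ => {x | c - 1/(n+1) ≤ H' x}) := by
      intro n m hnm x hx
      simp only [Set.mem_setOf_eq] at hx ⊢
      have h1 : (1:ℝ)/(m+1) ≤ 1/(n+1) := by
        apply one_div_le_one_div_of_le
        · positivity
        · exact_mod_cast add_le_add_left (Nat.cast_le.2 hnm) 1
      linarith
    rw [hseq, hanti.measure_iInter
      (fun n => (hH'meas measurableSet_Ici).nullMeasurableSet)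
      ⟨0, measure_ne_top ν _⟩]
    refine le_iInf fun n => hlow _ ?_
    have : (0:ℝ) < 1/(n+1) := by positivity
    linarith
  -- measure of {H' > c} is at most αM
  have hm1 : ν {x | c < H' x} ≤ ENNReal.ofReal (α * M) := by
    have hub : ∀ b, c < b → ν {x | b ≤ H' x} ≤ ENNReal.ofReal (α * M) := by
      intro b hb
      have hbS : b ∉ S := fun hbS => absurd (hc ▸ le_csSup hSbdd hbS) (not_le.2 hb)
      have hb0 : 0 ≤ b := le_trans hc0 hb.le
      have hlt : (volume {x ∈ D | b ≤ H x}).toReal < α * M := by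
        by_contra hge
        push_neg at hge
        exact hbS ⟨hb0, hge⟩
      rw [hvol] at hlt
      exact ((ENNReal.lt_ofReal_iff_toReal_lt (measure_ne_top ν _)).2 hlt).le
    have hseq : {x | c < H' x} = ⋃ n : ℕ, {x | c + 1/(n+1) ≤ H' x} := by
      ext x
      simp only [Set.mem_iUnion, Set.mem_setOf_eq]
      constructor
      · intro h
        obtain ⟨n, hn⟩ := exists_nat_one_div_lt (show (0:ℝ) < H' x - c by linarith)
        exact ⟨n, by linarith⟩
      · rintro ⟨n, hn⟩
        have : (0:ℝ) < 1/(n+1) := by positivity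
        linarith
    have hmono : Monotone (fun n : ℕ => {x | c + 1/(n+1) ≤ H' x}) := by
      intro n m hnm x hx
      simp only [Set.mem_setOf_eq] at hx ⊢
      have h1 : (1:ℝ)/(m+1) ≤ 1/(n+1) := by
        apply one_div_le_one_div_of_le
        · positivity
        · exact_mod_cast add_le_add_left (Nat.cast_le.2 hnm) 1
      linarith
    rw [hseq, hmono.measure_iUnion]
    refine iSup_le fun n => hub _ ?_
    have : (0:ℝ) < 1/(n+1) := by positivity
    linarith
  -- split the measure of {H' ≥ c}
  set m1 := ν {x | c < H' x} with hm1def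
  set me := ν {x | H' x = c} with hmedef
  have hAmeas : MeasurableSet {x | c < H' x} := hH'meas measurableSet_Ioi
  have hEmeas : MeasurableSet {x | H' x = c} := hH'meas (measurableSet_singleton c)
  have hsplit : ν {x | c ≤ H' x} = m1 + me := by
    have hU : {x | c ≤ H' x} = {x | c < H' x} ∪ {x | H' x = c} := by
      ext x
      simp only [Set.mem_setOf_eq, Set.mem_union]
      constructor
      · intro h
        rcases lt_or_eq_of_le h with h' | h'
        · exact Or.inl h'
        · exact Or.inr h'.symm
      · rintro (h | h)
        · exact h.le
        · exact h.ge
    have hdisj : Disjoint {x | c < H' x} {x | H' x = c} := by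
      rw [Set.disjoint_left]
      intro x h1 h2
      simp only [Set.mem_setOf_eq] at h1 h2
      exact absurd h2 (ne_of_gt h1)
    rw [hU, measure_union hdisj hEmeas]
  have hm1fin : m1 ≠ ⊤ := measure_ne_top ν _
  have hmefin : me ≠ ⊤ := measure_ne_top ν _
  have hm1le : m1.toReal ≤ α * M := by
    have := ENNReal.toReal_le_toReal hm1fin ENNReal.ofReal_ne_top |>.2 hm1
    rwa [ENNReal.toReal_ofReal hαM0.le] at this
  have hm2' : ENNReal.ofReal (α * M) ≤ m1 + me := le_trans hm2 (le_of_eq hsplit)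
  have hm2ge : α * M ≤ m1.toReal + me.toReal := by
    have h1 := (ENNReal.toReal_le_toReal ENNReal.ofReal_ne_top
      (ENNReal.add_ne_top.2 ⟨hm1fin, hmefin⟩)).2 hm2'
    rwa [ENNReal.toReal_ofReal hαM0.le, ENNReal.toReal_add hm1fin hmefin] at h1
  -- the exchange competitor
  set t : ℝ := (α * M - m1.toReal) / me.toReal with htdef
  have ht0 : 0 ≤ t := div_nonneg (by linarith) ENNReal.toReal_nonneg
  have ht1 : t ≤ 1 := by
    rcases eq_or_ne me.toReal 0 with h | h
    · rw [htdef, h, div_zero]; exact zero_le_one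
    · rw [htdef, div_le_one (lt_of_le_of_ne ENNReal.toReal_nonneg (Ne.symm h))]
      linarith
  set θt : EuclideanSpace ℝ (Fin d) → ℝ :=
    fun x => if c < H' x then (1:ℝ) else if H' x = c then t else 0 with hθtdef
  have hθtm : Measurable θt := by
    apply Measurable.ite hAmeas measurable_const
    exact Measurable.ite hEmeas measurable_const measurable_const
  have hθtbdd : ∀ x, θt x ∈ Set.Icc (0:ℝ) 1 := by
    intro x
    rw [hθtdef]
    dsimp only
    split_ifs
    · exact ⟨zero_le_one, le_refl 1⟩
    · exact ⟨ht0, ht1⟩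
    · exact ⟨le_refl 0, zero_le_one⟩
  have hθtint : ∫ x, θt x ∂ν = α * M := by
    have heq : θt = fun x => Set.indicator {x | c < H' x} (fun _ => (1:ℝ)) x
        + Set.indicator {x | H' x = c} (fun _ => t) x := by
      funext x
      by_cases h1 : c < H' x
      · have h2 : H' x ≠ c := ne_of_gt h1
        simp [hθtdef, Set.indicator, h1, h2]
      · by_cases h2 : H' x = c <;> simp [hθtdef, Set.indicator, h1, h2]
    rw [heq, integral_add ((integrable_const (1:ℝ)).indicator hAmeas)
      ((integrable_const t).indicator hEmeas),
      integral_indicator_const (1:ℝ) hAmeas, integral_indicator_const t hEmeas]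
    simp only [smul_eq_mul, mul_one]
    rw [measureReal_def, measureReal_def, ← hm1def, ← hmedef]
    rcases eq_or_ne me (0 : ENNReal) with h | h
    · have hmeq : m1 = ENNReal.ofReal (α * M) := by
        apply le_antisymm hm1
        have h2 := le_trans hm2 (le_of_eq hsplit)
        rwa [h, add_zero] at h2
      have h0 : me.toReal = 0 := by rw [h]; simp
      rw [h0, zero_mul, add_zero, hmeq, ENNReal.toReal_ofReal hαM0.le]
    · have h0 : me.toReal ≠ 0 := ENNReal.toReal_ne_zero.2 ⟨h, hmefin⟩
      have hmul : me.toReal * t = α * M - m1.toReal := by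
        rw [htdef, mul_div_cancel₀ _ h0]
      linarith
  have hθtΘ : θt ∈ Θ := by
    rw [hΘ]
    exact ⟨hθtm.aestronglyMeasurable, ae_of_all _ hθtbdd, hθtint⟩
  -- integrability facts
  have hiθsH : Integrable (fun x => θs x * H x) ν := by
    apply Integrable.mono' hH.norm (hθsm.mul hH.1)
    filter_upwards [hθsb] with x hx
    simp only [Pi.mul_apply]
    rw [norm_mul]
    calc ‖θs x‖ * ‖H x‖ ≤ 1 * ‖H x‖ := by
          apply mul_le_mul_of_nonneg_right _ (norm_nonneg _)
          rw [Real.norm_eq_abs, abs_le]; exact ⟨by linarith [hx.1], hx.2⟩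
      _ = ‖H x‖ := one_mul _
  have hiθtH : Integrable (fun x => θt x * H x) ν := by
    apply Integrable.mono' hH.norm (hθtm.aestronglyMeasurable.mul hH.1)
    filter_upwards with x
    simp only [Pi.mul_apply]
    rw [norm_mul]
    have hx := hθtbdd x
    calc ‖θt x‖ * ‖H x‖ ≤ 1 * ‖H x‖ := by
          apply mul_le_mul_of_nonneg_right _ (norm_nonneg _)
          rw [Real.norm_eq_abs, abs_le]; exact ⟨by linarith [hx.1], hx.2⟩
      _ = ‖H x‖ := one_mul _
  have hiθs : Integrable θs ν := by
    apply Integrable.mono' (integrable_const (1:ℝ)) hθsm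
    filter_upwards [hθsb] with x hx
    rw [Real.norm_eq_abs, abs_le]; exact ⟨by linarith [hx.1], hx.2⟩
  have hiθt : Integrable θt ν := by
    apply Integrable.mono' (integrable_const (1:ℝ)) hθtm.aestronglyMeasurable
    filter_upwards with x
    have hx := hθtbdd x
    rw [Real.norm_eq_abs, abs_le]; exact ⟨by linarith [hx.1], hx.2⟩
  -- the key function
  set f : EuclideanSpace ℝ (Fin d) → ℝ := fun x => (θt x - θs x) * (H x - c) with hfdef
  have hfeq : f = fun x => (θt x * H x - θs x * H x) - (c * θt x - c * θs x) := by
    funext x; rw [hfdef]; ring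
  have hfi : Integrable f ν := by
    rw [hfeq]
    exact (hiθtH.sub hiθsH).sub ((hiθt.const_mul c).sub (hiθs.const_mul c))
  have hfle : ∫ x, f x ∂ν ≤ 0 := by
    have hcong : ∫ x, f x ∂ν
        = ∫ x, (θt x * H x - θs x * H x) - (c * θt x - c * θs x) ∂ν := by
      apply integral_congr_ae
      filter_upwards with x
      show f x = _
      rw [hfdef]
      ring
    have hi1 : Integrable (fun x => θt x * H x - θs x * H x) ν := by
      exact hiθtH.sub hiθsH
    have hi2 : Integrable (fun x => c * θt x - c * θs x) ν := by
      exact (hiθt.const_mul c).sub (hiθs.const_mul c)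
    rw [hcong, integral_sub hi1 hi2,
      integral_sub hiθtH hiθsH, integral_sub (hiθt.const_mul c) (hiθs.const_mul c),
      integral_const_mul, integral_const_mul]
    have h1 : ∫ x, θt x ∂ν = ∫ x, θs x ∂ν := by rw [hθtint, hθsint]
    have h2 : ∫ x, θt x * H x ∂ν ≤ ∫ x, θs x * H x ∂ν := hmax θt hθtΘ
    rw [h1]
    linarith
  have hfnn : 0 ≤ᵐ[ν] f := by
    filter_upwards [hθsb, hHH'] with x hb hx
    simp only [Pi.zero_apply, hfdef]
    rcases lt_trichotomy (H' x) c with h | h | h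
    · have h1 : ¬ c < H' x := by linarith
      have h2 : H' x ≠ c := ne_of_lt h
      have h3 : θt x = 0 := by simp [hθtdef, h1, h2]
      rw [h3, hx]
      have heq : (0 - θs x) * (H' x - c) = θs x * (c - H' x) := by ring
      rw [heq]
      exact mul_nonneg hb.1 (by linarith)
    · rw [hx, h, sub_self, mul_zero]
    · have h3 : θt x = 1 := by simp [hθtdef, h]
      rw [h3, hx]
      exact mul_nonneg (by linarith [hb.2]) (by linarith)
  have hfzero : f =ᵐ[ν] 0 := by
    rw [← integral_eq_zero_iff_of_nonneg_ae hfnn hfi]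
    exact le_antisymm hfle (integral_nonneg_of_ae hfnn)
  -- conclude
  have hkey : ∀ᵐ x ∂ν, ¬ (c < H x ∧ θs x < 1) ∧ ¬ (H x < c ∧ 0 < θs x) := by
    filter_upwards [hfzero, hθsb, hHH'] with x hf hb hx
    rw [hfdef] at hf
    simp only [Pi.zero_apply] at hf
    constructor
    · rintro ⟨h1, h2⟩
      have h3 : θt x = 1 := by
        have : c < H' x := hx ▸ h1
        simp [hθtdef, this]
      rw [h3] at hf
      have hpos := mul_pos (show (0:ℝ) < 1 - θs x by linarith)
        (show (0:ℝ) < H x - c by linarith)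
      linarith
    · rintro ⟨h1, h2⟩
      have h4 : ¬ c < H' x := by rw [← hx]; linarith
      have h5 : H' x ≠ c := by rw [← hx]; exact ne_of_lt h1
      have h3 : θt x = 0 := by simp [hθtdef, h4, h5]
      rw [h3] at hf
      have heq : (0 - θs x) * (H x - c) = θs x * (c - H x) := by ring
      have hpos := mul_pos h2 (show (0:ℝ) < c - H x by linarith)
      linarith
  have hnull : ∀ P : EuclideanSpace ℝ (Fin d) → Prop,
      (∀ᵐ x ∂ν, ¬ P x) → volume {x ∈ D | P x} = 0 := by
    intro P hP
    have h1 : ν {x | ¬ ¬ P x} = 0 := ae_iff.1 hP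
    have h2 : ν {x | P x} = 0 :=
      measure_mono_null (fun x hx => not_not.2 hx) h1
    rw [hsetD, ← hres]
    exact h2
  exact ⟨hnull _ ((hkey.mono) fun x hx => hx.1), hnull _ ((hkey.mono) fun x hx => hx.2)⟩
end
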